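/- Let X be a topological space, (f_j) an equi-coercive sequence of functionals from X to ℝ∪{+∞} that Γ-converges to f_∞ with f_∞ not identically +∞. If ε_j → 0, ε_j > 0, and x_j is an ε_j-minimizer of f_j for each j, then the sequence (x_j) has a cluster point. -/

import Mathlib

open Filter Topology

/-- The Γ-lower limit, defined via open neighborhoods. -/
noncomputable def GammaLiminf {X : Type*} [TopologicalSpace X]
    (f : ℕ → X → EReal) (x : X) : EReal :=
  ⨆ (U : Set X) (_ : IsOpen U) (_ : x ∈ U),
    atTop.liminf (fun j => ⨅ y ∈ U, f j y)

/-- The Γ-upper limit, defined via open neighborhoods. -/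
noncomputable def GammaLimsup {X : Type*} [TopologicalSpace X]
    (f : ℕ → X → EReal) (x : X) : EReal :=
  ⨆ (U : Set X) (_ : IsOpen U) (_ : x ∈ U),
    atTop.limsup (fun j => ⨅ y ∈ U, f j y)

/-- If `(fj)` is equi-coercive and Γ-converges to `finf`, with
`finf` not identically `+∞`, and `x j` is an `ε j`-minimizer of `fj j` with
`ε j → 0`, then `(x j)` has a cluster point. Functionals take values in
`ℝ ∪ {+∞}`. -/
theorem eps_minimizers_have_cluster_point
    {X : Type*} [TopologicalSpace X]
    (fj : ℕ → X → EReal) (finf : X → EReal)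
    (hnotbot : ∀ j x, fj j x ≠ ⊥)
    (hequicoercive : ∀ t : ℝ, ∃ K : Set X, IsClosed K ∧ IsCompact K ∧
      ∀ j, {x : X | fj j x ≤ (t : EReal)} ⊆ K)
    (hGamma : ∀ x, GammaLiminf fj x = finf x ∧ GammaLimsup fj x = finf x)
    (hne : ∃ x, finf x ≠ ⊤)
    (ε : ℕ → ℝ) (hε : ∀ j, 0 < ε j) (hε0 : Tendsto ε atTop (𝓝 0))
    (x : ℕ → X)
    (hmin : ∀ j, fj j (x j) ≤
      max ((⨅ y : X, fj j y) + ((ε j : ℝ) : EReal)) (((-(ε j)⁻¹ : ℝ) : EReal))) :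
    ∃ xinf : X, MapClusterPt xinf atTop x := by
  classical
  obtain ⟨x₀, hx₀⟩ := hne
  have hlimsup : atTop.limsup (fun j => ⨅ y : X, fj j y) ≤ finf x₀ := by
    rw [← (hGamma x₀).2]
    have h : atTop.limsup (fun j => ⨅ y ∈ (Set.univ : Set X), fj j y) ≤ GammaLimsup fj x₀ := by
      refine le_iSup_of_le Set.univ ?_
      refine le_iSup_of_le isOpen_univ ?_
      exact le_iSup_of_le (Set.mem_univ x₀) le_rfl
    simpa using h
  obtain ⟨c, hc1, hc2⟩ := EReal.exists_between_coe_real (lt_top_iff_ne_top.mpr hx₀)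
  have hev1 : ∀ᶠ j in atTop, (⨅ y : X, fj j y) < (c : EReal) :=
    eventually_lt_of_limsup_lt (lt_of_le_of_lt hlimsup hc1)
  have hev2 : ∀ᶠ j in atTop, ε j < 1 := hε0.eventually_lt_const one_pos
  obtain ⟨K, hKc, hKcomp, hKsub⟩ := hequicoercive (max (c + 1) (-1))
  have hev : ∀ᶠ j in atTop, x j ∈ K := by
    filter_upwards [hev1, hev2] with j h1 h2
    apply hKsub j
    have hb1 : (⨅ y : X, fj j y) + ((ε j : ℝ) : EReal) ≤ ((max (c + 1) (-1) : ℝ) : EReal) := by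
      calc (⨅ y : X, fj j y) + ((ε j : ℝ) : EReal)
          ≤ (c : EReal) + ((1 : ℝ) : EReal) := add_le_add h1.le (by exact_mod_cast h2.le)
        _ = ((c + 1 : ℝ) : EReal) := by norm_cast
        _ ≤ _ := by exact_mod_cast le_max_left _ _
    have hb2 : ((-(ε j)⁻¹ : ℝ) : EReal) ≤ ((max (c + 1) (-1) : ℝ) : EReal) := by
      have h3 : (1 : ℝ) ≤ (ε j)⁻¹ := by
        have := hε j
        rw [le_inv_comm₀ (by norm_num) this]
        simpa using h2.le
      have : (-(ε j)⁻¹ : ℝ) ≤ max (c + 1) (-1) :=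
        le_trans (by linarith) (le_max_right _ _)
      exact_mod_cast this
    exact (hmin j).trans (max_le hb1 hb2)
  have hle : map x atTop ≤ 𝓟 K := le_principal_iff.mpr (mem_map.mpr hev)
  obtain ⟨xinf, _, hcl⟩ := hKcomp.exists_clusterPt hle
  exact ⟨xinf, hcl⟩
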